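/- arXiv:2501.02067 — 2 statements merged into one kernel-verified Lean document; each statement's English description precedes it below -/
import Mathlib

section
/- Let f : ℝⁿ → ℝ ∪ {∞} be lower semicontinuous, x̄ ∈ dom f, v̄ ∈ ℝⁿ, and let μ > κ be real numbers. If d²f(x̄|v̄)(w) ≥ μ‖w‖² for all w ∈ ℝⁿ, then there exists a neighborhood U of x̄ such that f(x) ≥ f(x̄) + ⟨v̄, x − x̄⟩ + (κ/2)‖x − x̄‖² for all x ∈ U. -/
open Filter Topology
open scoped RealInnerProductSpace

variable {n : ℕ}

/-- The second-order subderivative `d²f(x|v)(w)`, defined as the lower epigraphical limit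
of the second-order difference quotients
`Δ_t²f(x|v)(w') = (f(x + t w') − f(x) − t⟪v, w'⟫)/(t²/2)` as `t ↓ 0`, `w' → w`. -/
noncomputable def secondSubderiv (f : EuclideanSpace ℝ (Fin n) → EReal)
    (x v w : EuclideanSpace ℝ (Fin n)) : EReal :=
  Filter.liminf
    (fun p : ℝ × EuclideanSpace ℝ (Fin n) =>
      (((2 / p.1 ^ 2 : ℝ) : EReal)) *
        (f (x + p.1 • p.2) - (f x + ((p.1 * ⟪v, p.2⟫ : ℝ) : EReal))))
    ((𝓝[>] (0 : ℝ)) ×ˢ 𝓝 w)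

/-- If `d²f(x₀|v₀)(w) ≥ μ‖w‖²` for all `w` with `μ > κ`, then the quadratic growth
condition with modulus `κ` holds on some neighborhood of `x₀`. -/
theorem quadratic_growth_of_secondSubderiv_ge
    (f : EuclideanSpace ℝ (Fin n) → EReal) (x₀ v₀ : EuclideanSpace ℝ (Fin n)) (κ μ : ℝ)
    (hlsc : LowerSemicontinuous f) (hdom : f x₀ ≠ ⊤) (hbot : ∀ x, f x ≠ ⊥)
    (hκμ : κ < μ)
    (hd2 : ∀ w, ((μ * ‖w‖ ^ 2 : ℝ) : EReal) ≤ secondSubderiv f x₀ v₀ w) :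
    ∀ᶠ x in 𝓝 x₀,
      f x₀ + ((⟪v₀, x - x₀⟫ + κ / 2 * ‖x - x₀‖ ^ 2 : ℝ) : EReal) ≤ f x := by
  by_contra hcon
  rw [Filter.not_eventually] at hcon
  obtain ⟨u, hu_tend, hu⟩ := Filter.exists_seq_forall_of_frequently hcon
  -- each u k ≠ x₀
  have hne : ∀ k, u k ≠ x₀ := by
    intro k hk
    apply hu k
    rw [hk]
    simp
  set t : ℕ → ℝ := fun k => ‖u k - x₀‖ with ht
  have htpos : ∀ k, 0 < t k := fun k => by
    simpa [ht] using norm_pos_iff.mpr (sub_ne_zero.mpr (hne k))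
  set w : ℕ → EuclideanSpace ℝ (Fin n) := fun k => (t k)⁻¹ • (u k - x₀) with hw
  have hwmem : ∀ k, w k ∈ Metric.sphere (0 : EuclideanSpace ℝ (Fin n)) 1 := by
    intro k
    simp [hw, norm_smul, abs_of_pos (htpos k),
      inv_mul_cancel₀ (htpos k).ne']
    exact inv_mul_cancel₀ (htpos k).ne'
  obtain ⟨wlim, hwlimmem, φ, hφ, hwtend⟩ :=
    (isCompact_sphere (0 : EuclideanSpace ℝ (Fin n)) 1).tendsto_subseq hwmem
  have httend0 : Tendsto t atTop (𝓝 0) := by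
    have := (tendsto_sub_nhds_zero_iff.mpr hu_tend).norm
    simpa using this
  have httend : Tendsto t atTop (𝓝[>] (0 : ℝ)) :=
    tendsto_nhdsWithin_of_tendsto_nhds_of_eventually_within _ httend0
      (Eventually.of_forall htpos)
  -- the sequence of pairs
  set p : ℕ → ℝ × EuclideanSpace ℝ (Fin n) := fun k => (t (φ k), w (φ k)) with hp
  have hptend : Tendsto p atTop ((𝓝[>] (0 : ℝ)) ×ˢ 𝓝 wlim) :=
    Tendsto.prodMk (httend.comp hφ.tendsto_atTop) hwtend
  -- key bound on difference quotients
  have hbound : ∀ k,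
      (((2 / (p k).1 ^ 2 : ℝ) : EReal)) *
        (f (x₀ + (p k).1 • (p k).2) - (f x₀ + (((p k).1 * ⟪v₀, (p k).2⟫ : ℝ) : EReal)))
      ≤ ((κ : ℝ) : EReal) := by
    intro k
    set j := φ k
    have htj : 0 < t j := htpos j
    have hxj : x₀ + t j • w j = u j := by
      simp [hw, smul_inv_smul₀ htj.ne']
    have hlt : f (u j) <
        f x₀ + ((⟪v₀, u j - x₀⟫ + κ / 2 * ‖u j - x₀‖ ^ 2 : ℝ) : EReal) :=
      not_le.mp (hu j)
    -- f x₀ is real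
    obtain ⟨a, ha⟩ : ∃ a : ℝ, f x₀ = (a : EReal) :=
      ⟨(f x₀).toReal, ((f x₀).coe_toReal hdom (hbot x₀)).symm⟩
    have hfin : f (u j) ≠ ⊤ := by
      intro htop
      rw [htop, ha, ← EReal.coe_add] at hlt
      exact not_top_lt hlt
    obtain ⟨r, hr⟩ : ∃ r : ℝ, f (u j) = (r : EReal) :=
      ⟨(f (u j)).toReal, ((f (u j)).coe_toReal hfin (hbot (u j))).symm⟩
    have hinner : t j * ⟪v₀, w j⟫ = ⟪v₀, u j - x₀⟫ := by
      rw [hw]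
      simp only [real_inner_smul_right]
      field_simp
    have hrlt : r < a + (⟪v₀, u j - x₀⟫ + κ / 2 * ‖u j - x₀‖ ^ 2) := by
      rw [hr, ha, ← EReal.coe_add] at hlt
      exact_mod_cast hlt
    have hreal : 2 / (t j) ^ 2 * (r - (a + t j * ⟪v₀, w j⟫)) ≤ κ := by
      rw [hinner, show t j = ‖u j - x₀‖ from rfl]
      have h2 : (0:ℝ) < ‖u j - x₀‖^2 := by positivity
      rw [div_mul_eq_mul_div, div_le_iff₀ h2]
      nlinarith [hrlt]
    have : (p k).1 = t j := rfl
    simp only [hp, hxj, hr, ha, ← EReal.coe_add, ← EReal.coe_sub, ← EReal.coe_mul]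
    change ((2 / t j ^ 2 : ℝ) : EReal) * (f (x₀ + t j • w j) - ((a + t j * ⟪v₀, w j⟫ : ℝ) : EReal)) ≤ ((κ : ℝ) : EReal)
    rw [hxj, hr, ← EReal.coe_sub, ← EReal.coe_mul]
    exact_mod_cast hreal
  -- liminf bound
  have hle : secondSubderiv f x₀ v₀ wlim ≤ ((κ : ℝ) : EReal) := by
    apply liminf_le_of_frequently_le'
    exact hptend.frequently (Frequently.of_forall hbound)
  have hnorm : ‖wlim‖ = 1 := by simpa using hwlimmem
  have hge : ((μ : ℝ) : EReal) ≤ secondSubderiv f x₀ v₀ wlim := by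
    have := hd2 wlim
    rwa [hnorm, one_pow, mul_one] at this
  have : ((μ : ℝ) : EReal) ≤ ((κ : ℝ) : EReal) := le_trans hge hle
  exact absurd (EReal.coe_le_coe_iff.mp this) (not_le.mpr hκμ)
end

section
/- Let L be a linear subspace of ℝⁿ, B ∈ ℝⁿˣⁿ a symmetric matrix, λ > 0 and r ≥ 0 with λ < 1/r and ⟨x, Bx⟩ ≥ −r‖x‖² for all x ∈ ℝⁿ. Then the function q(w) := inf_{x ∈ L} { ⟨x, Bx⟩ + (1/λ)‖x − w‖² } is an ordinary quadratic form in w: if L = {0} then q(w) = (1/λ)‖w‖²; otherwise q(w) = ⟨w, Qw⟩ where Q := MBM + (1/λ)(M − I)² with M := (1/λ) C (Cᵀ(B + (1/λ)I)C)⁻¹ Cᵀ, C being any matrix whose columns form an orthogonal basis of L. -/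
open Matrix

/-- Moreau-type infimum of a generalized quadratic form over a subspace is an ordinary
quadratic form: with `B` symmetric, `λ > 0`, `r ≥ 0`, `λ < 1/r` (i.e. `r·λ < 1`) and
`⟨x,Bx⟩ ≥ −r‖x‖²` on `ℝⁿ`, the function `q(w) = inf_{x ∈ L} { ⟨x,Bx⟩ + (1/λ)‖x−w‖² }`
equals `(1/λ)‖w‖²` when `L = {0}`, and equals `⟨w, Qw⟩` with
`Q = MBM + (1/λ)(M−I)²`, `M = (1/λ) C (Cᵀ(B+(1/λ)I)C)⁻¹ Cᵀ`, for any matrix `C` whose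
columns form an orthogonal basis of `L`. -/
theorem inf_quadratic_over_subspace (n : ℕ) (L : Submodule ℝ (Fin n → ℝ))
    (B : Matrix (Fin n) (Fin n) ℝ) (hB : B.IsSymm)
    (lam r : ℝ) (hlam : 0 < lam) (hr : 0 ≤ r) (hlr : r * lam < 1)
    (hlow : ∀ x : Fin n → ℝ, -r * (x ⬝ᵥ x) ≤ x ⬝ᵥ B.mulVec x) :
    (L = ⊥ → ∀ w : Fin n → ℝ,
      sInf {s : ℝ | ∃ x ∈ L, s = x ⬝ᵥ B.mulVec x + (1 / lam) * ((x - w) ⬝ᵥ (x - w))} =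
        (1 / lam) * (w ⬝ᵥ w)) ∧
    (∀ (m : ℕ) (C : Matrix (Fin n) (Fin m) ℝ),
      (∀ i j : Fin m, i ≠ j → (C.transpose i) ⬝ᵥ (C.transpose j) = 0) →
      (∀ i : Fin m, C.transpose i ≠ 0) →
      L = Submodule.span ℝ (Set.range fun i : Fin m => C.transpose i) →
      ∀ w : Fin n → ℝ,
        sInf {s : ℝ | ∃ x ∈ L, s = x ⬝ᵥ B.mulVec x + (1 / lam) * ((x - w) ⬝ᵥ (x - w))} =
          w ⬝ᵥ
            (let M : Matrix (Fin n) (Fin n) ℝ :=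
              (1 / lam) • (C * (C.transpose * (B + (1 / lam) • (1 : Matrix (Fin n) (Fin n) ℝ)) * C)⁻¹ *
                C.transpose)
            (M * B * M + (1 / lam) • ((M - 1) * (M - 1))).mulVec w)) := by
  classical
  have hc : (0:ℝ) < 1 / lam := by positivity
  set c : ℝ := 1 / lam with hcdef
  -- positivity of dot product with itself
  have hds : ∀ x : Fin n → ℝ, x ≠ 0 → 0 < x ⬝ᵥ x := by
    intro x hx
    refine lt_of_le_of_ne (Finset.sum_nonneg fun i _ => mul_self_nonneg _) ?_
    intro h
    exact hx (dotProduct_self_eq_zero.mp h.symm)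
  -- the matrix A = B + c•1
  set A : Matrix (Fin n) (Fin n) ℝ := B + c • 1 with hAdef
  have hAsymm : Aᵀ = A := by
    rw [hAdef, transpose_add, transpose_smul, transpose_one, hB]
  have hAmul : ∀ x : Fin n → ℝ, A *ᵥ x = B *ᵥ x + c • x := by
    intro x
    rw [hAdef, add_mulVec, smul_mulVec, one_mulVec]
  have hAlow : ∀ x : Fin n → ℝ, (c - r) * (x ⬝ᵥ x) ≤ x ⬝ᵥ A *ᵥ x := by
    intro x
    have h1 := hlow x
    rw [hAmul, dotProduct_add, dotProduct_smul, smul_eq_mul]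
    nlinarith [h1]
  have hrc : r < c := by
    rw [hcdef, lt_div_iff₀ hlam]; exact hlr
  have hApos : ∀ x : Fin n → ℝ, x ≠ 0 → 0 < x ⬝ᵥ A *ᵥ x := by
    intro x hx
    have := hAlow x
    have h2 := hds x hx
    nlinarith
  have hA : A.PosDef := by
    refine Matrix.PosDef.of_dotProduct_mulVec_pos ?_ (fun x hx => ?_)
    · rw [Matrix.IsHermitian, conjTranspose_eq_transpose_of_trivial, hAsymm]
    · simpa using hApos x hx
  have hApsd : ∀ x : Fin n → ℝ, 0 ≤ x ⬝ᵥ A *ᵥ x := by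
    intro x
    by_cases hx : x = 0
    · simp [hx]
    · exact (hApos x hx).le
  -- symmetry of A as a bilinear identity
  have hAsd : ∀ u v : Fin n → ℝ, u ⬝ᵥ A *ᵥ v = v ⬝ᵥ A *ᵥ u := by
    intro u v
    rw [dotProduct_mulVec, ← mulVec_transpose, hAsymm, dotProduct_comm]
  -- expansion of the objective
  have fA : ∀ (w x : Fin n → ℝ),
      x ⬝ᵥ B *ᵥ x + c * ((x - w) ⬝ᵥ (x - w)) =
        x ⬝ᵥ A *ᵥ x - 2 * c * (x ⬝ᵥ w) + c * (w ⬝ᵥ w) := by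
    intro w x
    have hdc : w ⬝ᵥ x = x ⬝ᵥ w := dotProduct_comm _ _
    rw [hAmul, dotProduct_add, dotProduct_smul, smul_eq_mul, sub_dotProduct,
      dotProduct_sub, dotProduct_sub, hdc]
    ring
  constructor
  · -- trivial subspace case
    intro hL w
    subst hL
    have hset : {s : ℝ | ∃ x ∈ (⊥ : Submodule ℝ (Fin n → ℝ)),
        s = x ⬝ᵥ B.mulVec x + c * ((x - w) ⬝ᵥ (x - w))} = {c * (w ⬝ᵥ w)} := by
      ext s
      simp only [Set.mem_setOf_eq, Submodule.mem_bot, Set.mem_singleton_iff,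
        exists_eq_left]
      constructor
      · rintro rfl; simp
      · rintro rfl; simp
    rw [hset, csInf_singleton]
  · -- general case
    intro m C horth hnz hL w
    -- C has trivial kernel
    have Cinj : ∀ y : Fin m → ℝ, C *ᵥ y = 0 → y = 0 := by
      intro y hy
      funext i
      have h0 : Cᵀ *ᵥ (C *ᵥ y) = 0 := by rw [hy, mulVec_zero]
      have h1 : (Cᵀ *ᵥ (C *ᵥ y)) i = 0 := by rw [h0]; rfl
      rw [mulVec_mulVec] at h1
      have h2 : ((Cᵀ * C) *ᵥ y) i = ∑ j, (Cᵀ i ⬝ᵥ Cᵀ j) * y j := by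
        simp [Matrix.mulVec, dotProduct, Matrix.mul_apply, Finset.sum_mul,
          transpose_apply]
      have h3 : ∑ j, (Cᵀ i ⬝ᵥ Cᵀ j) * y j = (Cᵀ i ⬝ᵥ Cᵀ i) * y i := by
        refine Finset.sum_eq_single i (fun j _ hj => ?_) (by simp)
        rw [horth i j (Ne.symm hj), zero_mul]
      have h4 : (Cᵀ i ⬝ᵥ Cᵀ i) * y i = 0 := by rw [← h3, ← h2, h1]
      have h5 : Cᵀ i ⬝ᵥ Cᵀ i ≠ 0 := fun h => hnz i (dotProduct_self_eq_zero.mp h)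
      exact (mul_eq_zero.mp h4).resolve_left h5
    -- dot product transfer across C
    have lem1 : ∀ (y : Fin m → ℝ) (v : Fin n → ℝ),
        y ⬝ᵥ (Cᵀ *ᵥ v) = (C *ᵥ y) ⬝ᵥ v := by
      intro y v
      rw [dotProduct_mulVec, ← vecMul_transpose]
    -- the Gram-type matrix G
    set G : Matrix (Fin m) (Fin m) ℝ := Cᵀ * A * C with hGdef
    have hGsymm : Gᵀ = G := by
      rw [hGdef, transpose_mul, transpose_mul, transpose_transpose, hAsymm,
        Matrix.mul_assoc]
    have hG : G.PosDef := by
      refine Matrix.PosDef.of_dotProduct_mulVec_pos ?_ (fun y hy => ?_)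
      · rw [Matrix.IsHermitian, conjTranspose_eq_transpose_of_trivial, hGsymm]
      · have hCy : C *ᵥ y ≠ 0 := fun h => hy (Cinj y h)
        have : y ⬝ᵥ G *ᵥ y = (C *ᵥ y) ⬝ᵥ A *ᵥ (C *ᵥ y) := by
          rw [hGdef, ← mulVec_mulVec, ← mulVec_mulVec, lem1]
        simpa [this] using hApos _ hCy
    have hGinv : G * G⁻¹ = 1 := Matrix.mul_nonsing_inv _ hG.det_pos.ne'.isUnit
    -- the matrix M
    set Mm : Matrix (Fin n) (Fin n) ℝ := c • (C * G⁻¹ * Cᵀ) with hMdef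
    have hMsymm : Mmᵀ = Mm := by
      rw [hMdef, transpose_smul]
      congr 1
      simp only [transpose_mul, transpose_transpose, transpose_nonsing_inv, hGsymm,
        Matrix.mul_assoc]
    -- key algebraic identity: Cᵀ (A M) = c Cᵀ
    have key : Cᵀ * (A * Mm) = c • Cᵀ := by
      rw [hMdef, Matrix.mul_smul, Matrix.mul_smul]
      congr 1
      rw [← Matrix.mul_assoc, ← Matrix.mul_assoc, ← Matrix.mul_assoc,
        Matrix.mul_assoc (Cᵀ * A * C), ← hGdef, ← Matrix.mul_assoc, hGinv,
        Matrix.one_mul]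
    -- description of L as the range of C
    have hLr : L = LinearMap.range C.mulVecLin := by
      rw [hL, Matrix.range_mulVecLin]; rfl
    have hmemL : ∀ d : Fin n → ℝ, d ∈ L ↔ ∃ y : Fin m → ℝ, C *ᵥ y = d := by
      intro d
      rw [hLr]
      exact ⟨fun ⟨y, hy⟩ => ⟨y, hy⟩, fun ⟨y, hy⟩ => ⟨y, hy⟩⟩
    -- the minimizer
    set xh : Fin n → ℝ := Mm *ᵥ w with hxhdef
    have hxhL : xh ∈ L := by
      rw [hmemL]
      refine ⟨c • (G⁻¹ *ᵥ (Cᵀ *ᵥ w)), ?_⟩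
      rw [mulVec_smul, mulVec_mulVec, mulVec_mulVec, hxhdef, hMdef,
        smul_mulVec]
    -- orthogonality of the residual gradient to L
    have orth : ∀ d ∈ L, d ⬝ᵥ (A *ᵥ xh) - c * (d ⬝ᵥ w) = 0 := by
      intro d hd
      obtain ⟨y, hy⟩ := (hmemL d).mp hd
      have key' : Cᵀ * A * Mm = c • Cᵀ := by rw [Matrix.mul_assoc, key]
      have h1 : Cᵀ *ᵥ (A *ᵥ xh) = c • (Cᵀ *ᵥ w) := by
        rw [hxhdef, mulVec_mulVec, mulVec_mulVec, key', smul_mulVec]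
      have h2 : d ⬝ᵥ (A *ᵥ xh) = y ⬝ᵥ (Cᵀ *ᵥ (A *ᵥ xh)) := by rw [lem1, hy]
      have h3 : d ⬝ᵥ w = y ⬝ᵥ (Cᵀ *ᵥ w) := by rw [lem1, hy]
      rw [h2, h3, h1, dotProduct_smul, smul_eq_mul, sub_self]
    -- lower bound: f xh ≤ f x for x ∈ L
    have hle : ∀ x ∈ L,
        xh ⬝ᵥ B *ᵥ xh + c * ((xh - w) ⬝ᵥ (xh - w)) ≤
          x ⬝ᵥ B *ᵥ x + c * ((x - w) ⬝ᵥ (x - w)) := by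
      intro x hx
      have hdL : x - xh ∈ L := Submodule.sub_mem L hx hxhL
      have ho := orth (x - xh) hdL
      have hpsd := hApsd (x - xh)
      have hx' : x = xh + (x - xh) := by abel
      have hexp : x ⬝ᵥ A *ᵥ x =
          xh ⬝ᵥ A *ᵥ xh + (x - xh) ⬝ᵥ A *ᵥ (x - xh) +
            2 * ((x - xh) ⬝ᵥ A *ᵥ xh) := by
        conv_lhs => rw [hx']
        rw [mulVec_add, dotProduct_add, add_dotProduct, add_dotProduct,
          hAsd xh (x - xh)]
        ring
      have hdw : x ⬝ᵥ w = xh ⬝ᵥ w + (x - xh) ⬝ᵥ w := by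
        conv_lhs => rw [hx']
        rw [add_dotProduct]
      rw [fA w x, fA w xh, hexp, hdw]
      nlinarith [ho, hpsd]
    -- the claimed value equals f xh
    set Q : Matrix (Fin n) (Fin n) ℝ := Mm * B * Mm + c • ((Mm - 1) * (Mm - 1))
      with hQdef
    have hMdot : ∀ y : Fin n → ℝ, w ⬝ᵥ (Mm *ᵥ y) = xh ⬝ᵥ y := by
      intro y
      rw [dotProduct_mulVec, ← mulVec_transpose, hMsymm, hxhdef]
    have hval : w ⬝ᵥ Q *ᵥ w =
        xh ⬝ᵥ B *ᵥ xh + c * ((xh - w) ⬝ᵥ (xh - w)) := by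
      have hMw1 : (Mm - 1) *ᵥ w = xh - w := by
        rw [sub_mulVec, one_mulVec, ← hxhdef]
      have h2 : ((Mm - 1) * (Mm - 1)) *ᵥ w = Mm *ᵥ (xh - w) - (xh - w) := by
        rw [← mulVec_mulVec, hMw1, sub_mulVec, one_mulVec]
      have h3 : (Mm * B * Mm) *ᵥ w = Mm *ᵥ (B *ᵥ xh) := by
        rw [← mulVec_mulVec, ← hxhdef, ← mulVec_mulVec]
      have hQw : Q *ᵥ w = Mm *ᵥ (B *ᵥ xh) + c • (Mm *ᵥ (xh - w) - (xh - w)) := by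
        rw [hQdef, add_mulVec, smul_mulVec, h2, h3]
      rw [hQw, dotProduct_add, dotProduct_smul, smul_eq_mul, dotProduct_sub,
        hMdot, hMdot]
      simp only [sub_dotProduct, dotProduct_sub, dotProduct_comm w xh]
    -- conclude via the least element
    have hleast : IsLeast
        {s : ℝ | ∃ x ∈ L, s = x ⬝ᵥ B.mulVec x + c * ((x - w) ⬝ᵥ (x - w))}
        (xh ⬝ᵥ B *ᵥ xh + c * ((xh - w) ⬝ᵥ (xh - w))) := by
      constructor
      · exact ⟨xh, hxhL, rfl⟩
      · rintro s ⟨x, hx, rfl⟩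
        exact hle x hx
    dsimp only
    rw [hleast.csInf_eq, ← hval]
end
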